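/- Let k be an algebraically closed field and n a natural number. Let F : (Fin n → k) → (Fin n → k) be a map each of whose components is given by evaluation of a multivariate polynomial over k (i.e. there exist polynomials P₁,…,Pₙ ∈ k[X₁,…,Xₙ] with F(v)ᵢ = Pᵢ(v) for all v). Assume F is additive: F(v + w) = F(v) + F(w) for all v, w. If the set {v : Fin n → k | F(v) = 0} is finite, then F is surjective. -/

import Mathlib

open Polynomial in
lemma shift_inv_eval {R : Type*} [CommRing R] {r : R[X]}
    (hr : r.comp (X + 1) = r) (x : R) : r.eval (x + 1) = r.eval x := by
  conv_rhs => rw [← hr]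
  simp [eval_comp]

open Polynomial in
lemma shift_inv_small_deg {R : Type*} [CommRing R] [IsDomain R] {p : ℕ} (hp : p.Prime)
    [CharP R p] {r : R[X]} (hr : r.comp (X + 1) = r) (hdeg : r.natDegree < p) :
    ∃ c, r = C c := by
  have heval : ∀ m : ℕ, r.eval (m : R) = r.eval 0 := by
    intro m
    induction m with
    | zero => simp
    | succ m ih => rw [Nat.cast_succ, shift_inv_eval hr, ih]
  have hzero : r - C (r.eval 0) = 0 := by
    classical
    apply Polynomial.eq_zero_of_natDegree_lt_card_of_eval_eq_zero' _
      (Finset.image (fun m : ℕ => (m : R)) (Finset.range p))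
    · intro x hx
      obtain ⟨m, _, rfl⟩ := Finset.mem_image.mp hx
      simp [heval]
    · have hinj : Set.InjOn (fun m : ℕ => (m : R)) (Finset.range p) := by
        intro i hi j hj hij
        have := (CharP.natCast_eq_natCast R p).mp hij
        exact this.eq_of_lt_of_lt (Finset.mem_range.mp hi) (Finset.mem_range.mp hj)
      calc (r - C (r.eval 0)).natDegree ≤ r.natDegree := Polynomial.natDegree_sub_C.le
        _ < p := hdeg
        _ = (Finset.image (fun m : ℕ => (m : R)) (Finset.range p)).card := by
            rw [Finset.card_image_of_injOn hinj, Finset.card_range]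
  exact ⟨r.eval 0, by linear_combination (norm := ring_nf) hzero⟩

open Polynomial in
lemma shift_inv_comp {R : Type*} [CommRing R] [IsDomain R] {p : ℕ} (hp : p.Prime)
    [CharP R p] (f : R[X]) (hf : f.comp (X + 1) = f) :
    ∃ g : R[X], f = g.comp (X ^ p - X) := by
  haveI : Fact p.Prime := ⟨hp⟩
  have hmX : (1 : WithBot ℕ) < (p : WithBot ℕ) := by
    exact_mod_cast hp.one_lt
  have hm : (X ^ p - X : R[X]).Monic := by
    apply Polynomial.monic_X_pow_sub
    simpa [Polynomial.degree_X] using hmX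
  have hmdeg : (X ^ p - X : R[X]).degree = p := by
    rw [sub_eq_add_neg]
    rw [Polynomial.degree_add_eq_left_of_degree_lt]
    · exact Polynomial.degree_X_pow p
    · simpa [Polynomial.degree_X_pow] using hmX
  have hmcomp : (X ^ p - X : R[X]).comp (X + 1) = X ^ p - X := by
    simp only [Polynomial.sub_comp, Polynomial.pow_comp, Polynomial.X_comp]
    rw [add_pow_char]
    ring
  -- strong induction on natDegree
  suffices H : ∀ N : ℕ, ∀ f : R[X], f.natDegree ≤ N → f.comp (X + 1) = f →
      ∃ g : R[X], f = g.comp (X ^ p - X) by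
    exact H f.natDegree f le_rfl hf
  intro N
  induction N using Nat.strong_induction_on with
  | _ N ih =>
    intro f hdeg hf
    set m : R[X] := X ^ p - X with hm_def
    by_cases hsmall : f.natDegree < p
    · obtain ⟨c, rfl⟩ := shift_inv_small_deg hp hf hsmall
      exact ⟨C c, by simp⟩
    · push_neg at hsmall
      have hf0 : f ≠ 0 := by
        intro h
        rw [h] at hsmall
        simp at hsmall
        have := hp.pos
        omega
      set q := f /ₘ m with hq_def
      set r := f %ₘ m with hr_def
      have hdiv : r + m * q = f := Polynomial.modByMonic_add_div f m
      have hrdeg : r.degree < m.degree := Polynomial.degree_modByMonic_lt f hm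
      -- invariance of q and r
      have hcompdiv : r.comp (X + 1) + m * q.comp (X + 1) = f := by
        conv_rhs => rw [← hf, ← hdiv]
        simp only [Polynomial.add_comp, Polynomial.mul_comp, hmcomp]
      have hrnat : r.natDegree < p := by
        by_cases hr0 : r = 0
        · rw [hr0]
          simpa using hp.pos
        · exact (Polynomial.natDegree_lt_iff_degree_lt hr0).mpr (hmdeg ▸ hrdeg)
      have hrcompdeg : (r.comp (X + 1)).degree < m.degree := by
        rw [hmdeg]
        apply lt_of_le_of_lt Polynomial.degree_le_natDegree
        have hnc : (r.comp (X + 1)).natDegree ≤ r.natDegree := by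
          have h1 : (X + 1 : R[X]).natDegree = 1 := by
            simpa using Polynomial.natDegree_X_add_C (1 : R)
          have h2 := Polynomial.natDegree_comp_le (p := r) (q := X + 1)
          rwa [h1, mul_one] at h2
        exact_mod_cast lt_of_le_of_lt hnc hrnat
      have huniq := Polynomial.div_modByMonic_unique (q.comp (X + 1)) (r.comp (X + 1)) hm
        ⟨hcompdiv, hrcompdeg⟩
      have hqinv : q.comp (X + 1) = q := huniq.1.symm
      have hrinv : r.comp (X + 1) = r := huniq.2.symm
      -- r is a constant
      obtain ⟨c, hc⟩ := shift_inv_small_deg hp hrinv hrnat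
      -- q has smaller degree
      by_cases hq0 : q = 0
      · refine ⟨C c, ?_⟩
        rw [← hdiv, hq0, hc]
        simp
      · have hmne : m ≠ 0 := hm.ne_zero
        have hdq : (m * q).degree = m.degree + q.degree := Polynomial.degree_mul
        have hrlt : r.degree < (m * q).degree := by
          rw [hdq]
          exact lt_of_lt_of_le hrdeg (le_add_of_nonneg_right
            (Polynomial.zero_le_degree_iff.mpr hq0))
        have hfdeg : f.degree = (m * q).degree := by
          rw [← hdiv]
          rw [add_comm]
          exact Polynomial.degree_add_eq_left_of_degree_lt hrlt
        have hnatm : m.natDegree = p := Polynomial.natDegree_eq_of_degree_eq_some hmdeg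
        have hnat : f.natDegree = p + q.natDegree := by
          have : f.natDegree = (m * q).natDegree := by
            rw [Polynomial.natDegree, Polynomial.natDegree, hfdeg]
          rw [this, Polynomial.natDegree_mul hmne hq0, hnatm]
        have hqdeg : q.natDegree < N := by
          have hple := hp.pos
          omega
        obtain ⟨g, hg⟩ := ih q.natDegree hqdeg q le_rfl hqinv
        refine ⟨X * g + C c, ?_⟩
        rw [← hdiv, hc, hg]
        simp only [Polynomial.add_comp, Polynomial.mul_comp, Polynomial.X_comp,
          Polynomial.C_comp]
        ring

open MvPolynomial in
lemma mv_invariant {k : Type*} [Field k] {m p : ℕ} (hp : p.Prime) [CharP k p]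
    (P : MvPolynomial (Fin (m + 1)) k)
    (hP : aeval (fun i : Fin (m + 1) => if i = 0 then X 0 + 1 else X i) P = P) :
    ∃ Q : MvPolynomial (Fin (m + 1)) k,
      P = aeval (fun i : Fin (m + 1) => if i = 0 then X 0 ^ p - X 0 else X i) Q := by
  classical
  haveI : CharP (MvPolynomial (Fin m) k) p :=
    charP_of_injective_ringHom (MvPolynomial.C_injective (Fin m) k) p
  set R := MvPolynomial (Fin m) k with hR
  set e := MvPolynomial.finSuccEquiv k m with he
  set σf : Fin (m + 1) → MvPolynomial (Fin (m + 1)) k :=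
    (fun i => if i = 0 then X 0 + 1 else X i) with hσf
  set τf : Fin (m + 1) → MvPolynomial (Fin (m + 1)) k :=
    (fun i => if i = 0 then X 0 ^ p - X 0 else X i) with hτf
  set A1 : Polynomial R →ₐ[k] Polynomial R :=
    (Polynomial.aeval (R := R) (Polynomial.X + 1)).restrictScalars k with hA1
  set A2 : Polynomial R →ₐ[k] Polynomial R :=
    (Polynomial.aeval (R := R) (Polynomial.X ^ p - Polynomial.X)).restrictScalars k with hA2
  have comm1 : A1.comp e.toAlgHom = e.toAlgHom.comp (MvPolynomial.aeval σf) := by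
    apply MvPolynomial.algHom_ext
    intro i
    refine Fin.cases ?_ (fun j => ?_) i
    · simp [hA1, hσf, he, MvPolynomial.finSuccEquiv_X_zero]
    · simp [hA1, hσf, he, MvPolynomial.finSuccEquiv_X_succ, Fin.succ_ne_zero,
        ← Polynomial.comp_eq_aeval]
  have comm2 : A2.comp e.toAlgHom = e.toAlgHom.comp (MvPolynomial.aeval τf) := by
    apply MvPolynomial.algHom_ext
    intro i
    refine Fin.cases ?_ (fun j => ?_) i
    · simp [hA2, hτf, he, MvPolynomial.finSuccEquiv_X_zero]
    · simp [hA2, hτf, he, MvPolynomial.finSuccEquiv_X_succ, Fin.succ_ne_zero,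
        ← Polynomial.comp_eq_aeval]
  have hfinv : (e P).comp (Polynomial.X + 1) = e P := by
    have h1 := congrArg (fun φ => φ P) comm1
    simp only [AlgHom.comp_apply] at h1
    rw [hP] at h1
    simpa [hA1, Polynomial.comp_eq_aeval] using h1
  obtain ⟨g, hg⟩ := shift_inv_comp hp (e P) hfinv
  refine ⟨e.symm g, ?_⟩
  apply e.injective
  have h2 := congrArg (fun φ => φ (e.symm g)) comm2
  simp only [AlgHom.comp_apply] at h2
  have h3 : e.toAlgHom (e.symm g) = g := e.apply_symm_apply g
  rw [show (e.toAlgHom : MvPolynomial (Fin (m+1)) k → Polynomial R) (e.symm g) = g from h3] at h2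
  rw [hg]
  have h4 : A2 g = g.comp (Polynomial.X ^ p - Polynomial.X) := by
    simp [hA2, Polynomial.comp_eq_aeval]
  rw [← h4, h2]
  simp

open MvPolynomial in
lemma aeval_eq_eval'' {k : Type*} [CommSemiring k] {n : ℕ} (v : Fin n → k)
    (q : MvPolynomial (Fin n) k) : aeval v q = eval v q := by
  rw [← MvPolynomial.coe_aeval_eq_eval]
  rfl

open MvPolynomial in
lemma eval_aeval' {k : Type*} [CommSemiring k] {n : ℕ} (v : Fin n → k)
    (g : Fin n → MvPolynomial (Fin n) k) (q : MvPolynomial (Fin n) k) :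
    eval v (aeval g q) = eval (fun i => eval v (g i)) q := by
  have h : aeval g q = bind₁ g q := rfl
  rw [h, ← aeval_eq_eval'' v, MvPolynomial.aeval_bind₁, ← aeval_eq_eval'']
  simp only [aeval_eq_eval'']

open MvPolynomial in
/-- A homomorphism of the vector group `𝔾ₐⁿ` over an algebraically closed field, given by
polynomial maps, with finite kernel is surjective on `k`-points. -/
theorem additive_polynomial_map_finite_kernel_surjective
    (k : Type*) [Field k] [IsAlgClosed k] (n : ℕ)
    (F : (Fin n → k) → (Fin n → k))
    (hpoly : ∃ P : Fin n → MvPolynomial (Fin n) k,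
      ∀ (v : Fin n → k) (i : Fin n), F v i = MvPolynomial.eval v (P i))
    (hadd : ∀ v w : Fin n → k, F (v + w) = F v + F w)
    (hker : {v : Fin n → k | F v = 0}.Finite) :
    Function.Surjective F := by
  classical
  suffices H : ∀ N : ℕ, ∀ (F : (Fin n → k) → (Fin n → k)),
      (∃ P : Fin n → MvPolynomial (Fin n) k,
        ∀ (v : Fin n → k) (i : Fin n), F v i = MvPolynomial.eval v (P i)) →
      (∀ v w : Fin n → k, F (v + w) = F v + F w) →
      ∀ hk : {v : Fin n → k | F v = 0}.Finite, hk.toFinset.card ≤ N →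
      Function.Surjective F by
    exact H hker.toFinset.card F hpoly hadd hker le_rfl
  clear hpoly hadd hker F
  have hzero : ∀ (F : (Fin n → k) → (Fin n → k)),
      (∀ v w : Fin n → k, F (v + w) = F v + F w) → F 0 = 0 := by
    intro F hadd
    have h := hadd 0 0
    rw [add_zero] at h
    have h2 : F 0 + F 0 = F 0 + 0 := by rw [← h, add_zero]
    exact add_left_cancel h2
  intro N
  induction N with
  | zero =>
    intro F hpoly hadd hk hcard
    exfalso
    have h0 : (0 : Fin n → k) ∈ hk.toFinset := by
      rw [Set.Finite.mem_toFinset]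
      exact hzero F hadd
    have := Finset.card_pos.mpr ⟨0, h0⟩
    omega
  | succ N ih =>
    intro F hpoly hadd hk hcard
    obtain ⟨P, hP⟩ := hpoly
    have hneg : ∀ v, F (-v) = - F v := by
      intro v
      have h := hadd v (-v)
      rw [add_neg_cancel, hzero F hadd] at h
      exact (eq_neg_of_add_eq_zero_right h.symm)
    by_cases htriv : ∀ v, F v = 0 → v = 0
    · -- trivial kernel: Ax-Grothendieck
      have hFdef : F = fun v i => MvPolynomial.eval v (P i) := by
        funext v i
        exact hP v i
      have hinj : Function.Injective F := by
        intro v w hvw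
        have hsub : F (v - w) = 0 := by
          rw [sub_eq_add_neg, hadd, hneg, hvw, add_neg_cancel]
        have := htriv _ hsub
        exact sub_eq_zero.mp this
      rw [hFdef] at hinj ⊢
      exact ax_grothendieck_univ P hinj
    · push_neg at htriv
      obtain ⟨a, haF, ha0⟩ := htriv
      obtain ⟨j, hj⟩ : ∃ j, a j ≠ 0 := by
        by_contra h
        push_neg at h
        exact ha0 (funext h)
      have hmemnat : ∀ m : ℕ, F (m • a) = 0 := by
        intro m
        induction m with
        | zero => simpa using hzero F hadd
        | succ m ihm => rw [succ_nsmul, hadd, ihm, haF, add_zero]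
      rcases CharP.char_is_prime_or_zero k (ringChar k) with hpp | hp0
      swap
      · -- characteristic zero: kernel infinite, contradiction
        exfalso
        haveI : CharP k 0 := hp0 ▸ ringChar.charP k
        haveI : CharZero k := CharP.charP_to_charZero k
        refine Set.infinite_of_injective_forall_mem
          (f := fun m : ℕ => m • a) (s := {v : Fin n → k | F v = 0}) ?_ ?_ hk
        · intro m m' hmm
          have := congrFun hmm j
          simp only [Pi.smul_apply, nsmul_eq_mul] at this
          exact Nat.cast_injective (mul_right_cancel₀ hj this)
        · intro m
          exact hmemnat m
      · -- characteristic p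
        set p := ringChar k with hpdef
        haveI : CharP k p := ringChar.charP k
        haveI : Fact p.Prime := ⟨hpp⟩
        obtain ⟨M, rfl⟩ : ∃ M, n = M + 1 := ⟨n - 1, (Nat.succ_pred_eq_of_pos j.pos).symm⟩
        set e₀ : Fin (M + 1) → k := Pi.single 0 1 with he₀
        set b : Fin (M + 1) → k := a - Pi.single j 1 with hb
        set σ := Equiv.swap (0 : Fin (M + 1)) j with hσdef
        have hσ0 : σ 0 = j := Equiv.swap_apply_left _ _
        have hσj : σ j = 0 := Equiv.swap_apply_right _ _
        have hσσ : ∀ i, σ (σ i) = i := fun i => Equiv.swap_apply_self _ _ _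
        set Φ : (Fin (M + 1) → k) → (Fin (M + 1) → k) :=
          fun v i => v (σ i) + v 0 * b i with hΦdef
        set Ψ : (Fin (M + 1) → k) → (Fin (M + 1) → k) :=
          fun w i => w (σ i) - (w j / a j) * b (σ i) with hΨdef
        have hbj : b j = a j - 1 := by simp [hb]
        have hΨΦ : ∀ v, Ψ (Φ v) = v := by
          intro v
          funext i
          simp only [hΨdef, hΦdef, hσσ, hσj, hbj]
          field_simp
          ring
        have hΦΨ : ∀ w, Φ (Ψ w) = w := by
          intro w
          funext i
          simp only [hΦdef, hΨdef, hσσ, hσ0, hbj]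
          field_simp
          ring
        have hΦe₀ : Φ e₀ = a := by
          funext i
          simp only [hΦdef, he₀, hb, Pi.sub_apply]
          rw [Pi.single_eq_same]
          by_cases hij : i = j
          · subst hij
            rw [show σ i = 0 from hσj, Pi.single_eq_same, Pi.single_eq_same]
            ring
          · have h1 : σ i ≠ 0 := by
              intro h
              apply hij
              have := congrArg σ h
              rwa [hσσ, hσ0] at this
            rw [Pi.single_eq_of_ne h1, Pi.single_eq_of_ne hij]
            ring
        have hΦadd : ∀ v w, Φ (v + w) = Φ v + Φ w := by
          intro v w
          funext i
          simp only [hΦdef, Pi.add_apply]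
          ring
        have hΦ0 : Φ 0 = 0 := by
          funext i
          simp [hΦdef]
        -- F' = F ∘ Φ
        set F' : (Fin (M + 1) → k) → (Fin (M + 1) → k) := fun v => F (Φ v) with hF'def
        set Rf : Fin (M + 1) → MvPolynomial (Fin (M + 1)) k :=
          fun l => X (σ l) + C (b l) * X 0 with hRf
        set P' : Fin (M + 1) → MvPolynomial (Fin (M + 1)) k :=
          fun i => aeval Rf (P i) with hP'
        have hP'eval : ∀ v i, F' v i = eval v (P' i) := by
          intro v i
          rw [hP', eval_aeval']
          have : (fun l => eval v (Rf l)) = Φ v := by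
            funext l
            simp only [hRf, hΦdef]
            simp [mul_comm]
          rw [this]
          exact hP (Φ v) i
        have hadd' : ∀ v w, F' (v + w) = F' v + F' w := by
          intro v w
          rw [hF'def]
          simp only
          rw [hΦadd, hadd]
        have he₀ker : F' e₀ = 0 := by
          rw [hF'def]
          simp only
          rw [hΦe₀]
          exact haF
        have hF'0 : F' 0 = 0 := by
          rw [hF'def]
          simp only
          rw [hΦ0]
          exact hzero F hadd
        -- invariance of P' under the shift
        have hPinv : ∀ i, aeval (fun l : Fin (M + 1) =>
            if l = 0 then X 0 + 1 else X l) (P' i) = P' i := by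
          intro i
          apply MvPolynomial.funext
          intro v
          rw [eval_aeval']
          have hpt : (fun l => eval v (if l = 0 then X 0 + 1 else X l)) = v + e₀ := by
            funext l
            by_cases hl : l = 0
            · subst hl
              simp [he₀]
            · simp [hl, he₀, Pi.single_eq_of_ne hl]
          rw [hpt, ← hP'eval, ← hP'eval]
          rw [hadd' v e₀, he₀ker, add_zero]
        choose Q hQ using fun i => mv_invariant hpp (P' i) (hPinv i)
        set G : (Fin (M + 1) → k) → (Fin (M + 1) → k) :=
          fun v l => if l = 0 then v 0 ^ p - v 0 else v l with hGdef
        set F₁ : (Fin (M + 1) → k) → (Fin (M + 1) → k) :=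
          fun v i => eval v (Q i) with hF₁def
        have hF'₁ : ∀ v, F' v = F₁ (G v) := by
          intro v
          funext i
          rw [hP'eval v i, hQ i, eval_aeval']
          have hpt : (fun l => eval v (if l = 0 then X 0 ^ p - X 0 else X l)) = G v := by
            funext l
            by_cases hl : l = 0
            · subst hl
              simp [hGdef]
            · simp [hl, hGdef]
          rw [hpt]
        have hGadd : ∀ v w, G (v + w) = G v + G w := by
          intro v w
          funext l
          by_cases hl : l = 0
          · subst hl
            simp only [hGdef, Pi.add_apply, if_pos]
            rw [add_pow_char]
            ring
          · simp [hGdef, hl]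
        have hGsurj : Function.Surjective G := by
          intro w
          obtain ⟨x, hx⟩ : ∃ x : k, x ^ p - x = w 0 := by
            have hdeg : (Polynomial.X ^ p - Polynomial.X - Polynomial.C (w 0) : Polynomial k).degree = p := by
              rw [sub_sub]
              rw [Polynomial.degree_sub_eq_left_of_degree_lt]
              · exact Polynomial.degree_X_pow p
              · rw [Polynomial.degree_X_pow]
                apply lt_of_le_of_lt (Polynomial.degree_add_le _ _) ?_
                rw [max_lt_iff]
                constructor
                · rw [Polynomial.degree_X]
                  exact_mod_cast hpp.one_lt
                · apply lt_of_le_of_lt Polynomial.degree_C_le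
                  exact_mod_cast hpp.pos
            have hdegne : (Polynomial.X ^ p - Polynomial.X - Polynomial.C (w 0) : Polynomial k).degree ≠ 0 := by
              rw [hdeg]
              simpa using hpp.ne_zero
            obtain ⟨x, hx⟩ := IsAlgClosed.exists_root _ hdegne
            refine ⟨x, ?_⟩
            simp only [Polynomial.IsRoot, Polynomial.eval_sub, Polynomial.eval_pow,
              Polynomial.eval_X, Polynomial.eval_C] at hx
            linear_combination hx
          refine ⟨fun l => if l = 0 then x else w l, ?_⟩
          funext l
          by_cases hl : l = 0
          · subst hl
            simp [hGdef, hx]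
          · simp [hGdef, hl]
        have hF₁add : ∀ u u', F₁ (u + u') = F₁ u + F₁ u' := by
          intro u u'
          obtain ⟨v, rfl⟩ := hGsurj u
          obtain ⟨v', rfl⟩ := hGsurj u'
          rw [← hGadd, ← hF'₁, ← hF'₁, ← hF'₁, hadd']
        -- kernels
        have hΦinj : Function.Injective Φ := Function.LeftInverse.injective hΨΦ
        have hk' : {v : Fin (M + 1) → k | F' v = 0}.Finite := by
          have : {v : Fin (M + 1) → k | F' v = 0} = Φ ⁻¹' {v | F v = 0} := rfl
          rw [this]
          exact Set.Finite.preimage hΦinj.injOn hk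
        have hGe₀ : G e₀ = 0 := by
          funext l
          by_cases hl : l = 0
          · subst hl
            simp [hGdef, he₀, hpp.ne_zero]
          · simp [hGdef, hl, he₀, Pi.single_eq_of_ne hl]
        have hG0 : G 0 = 0 := by
          funext l
          by_cases hl : l = 0
          · subst hl
            simp [hGdef, hpp.ne_zero]
          · simp [hGdef, hl]
        have hk₁ : {u : Fin (M + 1) → k | F₁ u = 0}.Finite := by
          have hset : {u : Fin (M + 1) → k | F₁ u = 0} = G '' {v | F' v = 0} := by
            ext u
            constructor
            · intro hu
              obtain ⟨v, rfl⟩ := hGsurj u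
              exact ⟨v, by rw [Set.mem_setOf_eq, hF'₁]; exact hu, rfl⟩
            · rintro ⟨v, hv, rfl⟩
              rw [Set.mem_setOf_eq, ← hF'₁]
              exact hv
          rw [hset]
          exact hk'.image G
        have he₀ne : e₀ ≠ (0 : Fin (M + 1) → k) := by
          intro h
          have := congrFun h 0
          rw [he₀, Pi.single_eq_same] at this
          exact one_ne_zero this
        have he₀mem : e₀ ∈ hk'.toFinset := by
          rw [Set.Finite.mem_toFinset]
          exact he₀ker
        have hcard' : hk'.toFinset.card ≤ N + 1 := by
          refine le_trans (Finset.card_le_card_of_injOn Φ ?_ hΦinj.injOn) hcard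
          intro v hv
          rw [Finset.mem_coe, Set.Finite.mem_toFinset] at hv ⊢
          exact hv
        have hcard₁ : hk₁.toFinset.card ≤ N := by
          have hsub : hk₁.toFinset ⊆ (hk'.toFinset.erase e₀).image G := by
            intro u hu
            rw [Set.Finite.mem_toFinset, Set.mem_setOf_eq] at hu
            obtain ⟨v, rfl⟩ := hGsurj u
            have hv : F' v = 0 := by rw [hF'₁]; exact hu
            by_cases hve : v = e₀
            · subst hve
              rw [hGe₀]
              refine Finset.mem_image.mpr ⟨0, ?_, hG0⟩
              rw [Finset.mem_erase]
              refine ⟨fun h => he₀ne h.symm, ?_⟩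
              rw [Set.Finite.mem_toFinset]
              exact hF'0
            · apply Finset.mem_image_of_mem
              rw [Finset.mem_erase]
              refine ⟨hve, ?_⟩
              rw [Set.Finite.mem_toFinset]
              exact hv
          calc hk₁.toFinset.card ≤ ((hk'.toFinset.erase e₀).image G).card :=
                Finset.card_le_card hsub
            _ ≤ (hk'.toFinset.erase e₀).card := Finset.card_image_le
            _ = hk'.toFinset.card - 1 := Finset.card_erase_of_mem he₀mem
            _ ≤ N := by omega
        have hF₁surj := ih F₁ ⟨Q, fun v i => rfl⟩ hF₁add hk₁ hcard₁
        intro w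
        obtain ⟨u, hu⟩ := hF₁surj w
        obtain ⟨v, rfl⟩ := hGsurj u
        exact ⟨Φ v, by rw [show F (Φ v) = F' v from rfl, hF'₁, hu]⟩
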